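/- For fixed t > 0 with t ≠ 1, the function β ↦ f_{1/β}^sw(t) = (1 - 1/β)(1 - t^β)/(1 - t^{β-1}) is monotonically increasing in β, for β ranging over values where the expression is defined (β ∉ {0, 1}). -/

import Mathlib

open Real Filter Set Topology intervalIntegral

namespace FSWaux

/-- The auxiliary function `G L β = (1 - exp (β L))/β`, extended by continuity at `0`. -/
noncomputable def G (L β : ℝ) : ℝ := if β = 0 then -L else (1 - Real.exp (β * L)) / β

noncomputable def Phi (L β : ℝ) : ℝ := Real.log (G L β)

/-- The logarithmic derivative of `G`, extended by `L/2` at `0`. -/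
noncomputable def F (L β : ℝ) : ℝ :=
  if β = 0 then L / 2 else L / (1 - Real.exp (-(β * L))) - 1 / β

lemma mul_exp_sub_one_pos {x : ℝ} (hx : x ≠ 0) : 0 < x * (Real.exp x - 1) := by
  rcases lt_or_gt_of_ne hx with h | h
  · have : Real.exp x < 1 := Real.exp_lt_one_iff.2 h
    nlinarith
  · have : 1 < Real.exp x := Real.one_lt_exp_iff.2 h
    nlinarith

lemma d_ne {L β : ℝ} (hL : L ≠ 0) (hβ : β ≠ 0) : 1 - Real.exp (β * L) ≠ 0 := by
  intro h
  have : Real.exp (β * L) = 1 := by linarith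
  exact (mul_ne_zero hβ hL) ((Real.exp_eq_one_iff _).1 this)

lemma d_ne' {L β : ℝ} (hL : L ≠ 0) (hβ : β ≠ 0) : 1 - Real.exp (-(β * L)) ≠ 0 := by
  intro h
  have : Real.exp (-(β * L)) = 1 := by linarith
  have h2 := (Real.exp_eq_one_iff _).1 this
  exact (mul_ne_zero hβ hL) (by linarith)

lemma G_mul_pos {L : ℝ} (hL : L ≠ 0) (β : ℝ) : 0 < G L β * (-L) := by
  by_cases hβ : β = 0
  · subst hβ
    have hG : G L 0 = -L := by simp [G]
    rw [hG]
    have : (0:ℝ) < L ^ 2 := by positivity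
    nlinarith
  · rw [G, if_neg hβ]
    have h := mul_exp_sub_one_pos (mul_ne_zero hβ hL)
    have hβ2 : (0:ℝ) < β ^ 2 := by positivity
    have heq : (1 - Real.exp (β * L)) / β * (-L) =
        (β * L) * (Real.exp (β * L) - 1) / β ^ 2 := by
      field_simp
      ring
    rw [heq]
    exact div_pos h hβ2

lemma G_ne {L : ℝ} (hL : L ≠ 0) (β : ℝ) : G L β ≠ 0 := by
  intro h
  have := G_mul_pos hL β
  rw [h] at this
  simp at this


variable {L β : ℝ}

lemma hasDerivAt_G (hβ : β ≠ 0) :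
    HasDerivAt (G L)
      ((-(Real.exp (β * L) * (1 * L)) * β - (1 - Real.exp (β * L)) * 1) / β ^ 2) β := by
  have h2 : HasDerivAt (fun x : ℝ => x * L) (1 * L) β := (hasDerivAt_id β).mul_const L
  have h3 : HasDerivAt (fun x : ℝ => Real.exp (x * L)) (Real.exp (β * L) * (1 * L)) β := h2.exp
  have h4 : HasDerivAt (fun x : ℝ => 1 - Real.exp (x * L))
      (-(Real.exp (β * L) * (1 * L))) β := h3.const_sub 1
  have h5 := h4.div (hasDerivAt_id β) hβ
  refine h5.congr_of_eventuallyEq ?_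
  filter_upwards [eventually_ne_nhds hβ] with x hx
  simp [G, if_neg hx]

lemma hasDerivAt_Phi (hL : L ≠ 0) (hβ : β ≠ 0) : HasDerivAt (Phi L) (F L β) β := by
  have h := (hasDerivAt_G (L := L) hβ).log (G_ne hL β)
  convert h using 1
  · rfl
  rw [F, if_neg hβ, G, if_neg hβ]
  have hd1 : 1 - Real.exp (β * L) ≠ 0 := d_ne hL hβ
  have hd2 : 1 - Real.exp (-(β * L)) ≠ 0 := d_ne' hL hβ
  have he : Real.exp (-(β * L)) = (Real.exp (β * L))⁻¹ := Real.exp_neg _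
  have hexp : Real.exp (β * L) ≠ 0 := (Real.exp_pos _).ne'
  have hd1' : -1 + Real.exp (β * L) ≠ 0 := fun h => hd1 (by linarith)
  rw [he] at hd2 ⊢
  have hd1'' : -1 + Real.exp (L * β) ≠ 0 := by rw [mul_comm]; exact hd1'
  have hc : (-1 + Real.exp (β * L)) * (-1 + Real.exp (β * L))⁻¹ = 1 := mul_inv_cancel₀ hd1'
  generalize Real.exp (β * L) = e at hd1 hexp ⊢
  have h3 : 1 - e⁻¹ = (e - 1) / e := by field_simp
  rw [h3]
  have h4 : e - 1 ≠ 0 := fun h => hd1 (by linarith)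
  field_simp
  ring


lemma continuousAt_G_zero (hL : L ≠ 0) : ContinuousAt (G L) 0 := by
  have h1 : HasDerivAt (fun x : ℝ => 1 - Real.exp (x * L)) (-L) 0 := by
    have h2 : HasDerivAt (fun x : ℝ => x * L) (1 * L) 0 := (hasDerivAt_id 0).mul_const L
    have h3 := (h2.exp).const_sub 1
    simpa using h3
  have h4 := hasDerivAt_iff_tendsto_slope.1 h1
  have h5 : Tendsto (G L) (𝓝[≠] (0:ℝ)) (𝓝 (-L)) := by
    refine h4.congr' ?_
    filter_upwards [self_mem_nhdsWithin] with x hx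
    have hx' : x ≠ 0 := hx
    simp [slope, G, if_neg hx', sub_zero, div_eq_inv_mul]
  have h6 : Tendsto (G L) (pure (0:ℝ)) (𝓝 (-L)) := by
    have hG0 : G L 0 = -L := by simp [G]
    simpa [hG0] using (tendsto_pure_nhds (G L) 0)
  have := nhdsNE_sup_pure (0:ℝ)
  unfold ContinuousAt
  have hG0 : G L 0 = -L := by simp [G]
  rw [hG0, ← this, tendsto_sup]
  exact ⟨h5, h6⟩


lemma continuous_Phi (hL : L ≠ 0) : Continuous (Phi L) := by
  rw [continuous_iff_continuousAt]
  intro x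
  by_cases hx : x = 0
  · subst hx
    exact (Real.continuousAt_log (G_ne hL 0)).comp (continuousAt_G_zero hL)
  · exact (hasDerivAt_Phi hL hx).continuousAt

lemma hasDerivAt_F (hL : L ≠ 0) (hβ : β ≠ 0) :
    HasDerivAt (F L)
      ((0 * (1 - Real.exp (-(β * L))) - L * (Real.exp (-(β * L)) * (1 * L))) /
          (1 - Real.exp (-(β * L))) ^ 2 - -(β ^ 2)⁻¹) β := by
  have h2 : HasDerivAt (fun x : ℝ => -(x * L)) (-(1 * L)) β := ((hasDerivAt_id β).mul_const L).neg
  have h3 := h2.exp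
  have h4 : HasDerivAt (fun x : ℝ => 1 - Real.exp (-(x * L)))
      (Real.exp (-(β * L)) * (1 * L)) β := by
    have := h3.const_sub 1
    simpa using this
  have h5 := (hasDerivAt_const β L).div h4 (d_ne' hL hβ)
  have h6 : HasDerivAt (fun x : ℝ => x⁻¹) (-(β ^ 2)⁻¹) β := hasDerivAt_inv hβ
  have h7 := h5.sub h6
  refine h7.congr_of_eventuallyEq ?_
  filter_upwards [eventually_ne_nhds hβ] with x hx
  simp [F, if_neg hx, one_div]

/-- For all `u ≥ 0`, `2u ≤ exp u - exp (-u)`. -/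
lemma two_mul_le_exp_sub {u : ℝ} (hu : 0 ≤ u) : 2 * u ≤ Real.exp u - Real.exp (-u) := by
  have hmono : MonotoneOn (fun u : ℝ => Real.exp u - Real.exp (-u) - 2 * u) (Ici 0) := by
    apply monotoneOn_of_deriv_nonneg (convex_Ici 0)
    · fun_prop
    · intro x hx
      have h : HasDerivAt (fun u : ℝ => Real.exp u - Real.exp (-u) - 2 * u)
          (Real.exp x - Real.exp (-x) * (-1) - 2) x := by
        have := ((Real.hasDerivAt_exp x).sub ((hasDerivAt_neg x).exp)).sub
          ((hasDerivAt_id x).const_mul 2)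
        exact this.congr_deriv (by ring)
      exact h.differentiableAt.differentiableWithinAt
    · intro x hx
      have h : HasDerivAt (fun u : ℝ => Real.exp u - Real.exp (-u) - 2 * u)
          (Real.exp x + Real.exp (-x) - 2) x := by
        have := ((Real.hasDerivAt_exp x).sub ((hasDerivAt_neg x).exp)).sub
          ((hasDerivAt_id x).const_mul 2)
        exact this.congr_deriv (by ring)
      rw [h.deriv]
      have he : 0 < Real.exp x := Real.exp_pos x
      have he2 : Real.exp x * Real.exp (-x) = 1 := by
        rw [← Real.exp_add]; simp
      nlinarith [sq_nonneg (Real.exp x - 1), he, he2]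
  have h2 : 0 ≤ Real.exp u - Real.exp (-u) - 2 * u := by
    have h0 : (0:ℝ) ∈ Ici (0:ℝ) := self_mem_Ici
    have := hmono h0 hu hu
    simpa using this
  linarith

/-- For all `u`, `(2u)² ≤ (exp u - exp (-u))²`. -/
lemma sq_two_mul_le {u : ℝ} : (2 * u) ^ 2 ≤ (Real.exp u - Real.exp (-u)) ^ 2 := by
  rcases le_or_gt 0 u with hu | hu
  · have h := two_mul_le_exp_sub hu
    nlinarith
  · have h := two_mul_le_exp_sub (neg_nonneg.2 hu.le)
    rw [neg_neg] at h
    nlinarith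

lemma F_deriv_nonneg (hL : L ≠ 0) (hβ : β ≠ 0) :
    0 ≤ (0 * (1 - Real.exp (-(β * L))) - L * (Real.exp (-(β * L)) * (1 * L))) /
          (1 - Real.exp (-(β * L))) ^ 2 - -(β ^ 2)⁻¹ := by
  set x := β * L with hx
  have hxne : x ≠ 0 := mul_ne_zero hβ hL
  have hd : 1 - Real.exp (-x) ≠ 0 := d_ne' hL hβ
  have hkey : x ^ 2 * Real.exp (-x) ≤ (1 - Real.exp (-x)) ^ 2 := by
    have hid : 1 - Real.exp (-x) = Real.exp (-(x/2)) * (Real.exp (x/2) - Real.exp (-(x/2))) := by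
      rw [mul_sub, ← Real.exp_add, ← Real.exp_add]
      ring_nf
      simp [Real.exp_zero]
      ring
    have hsq := sq_two_mul_le (u := x / 2)
    have hexp : Real.exp (-(x/2)) ^ 2 = Real.exp (-x) := by
      rw [sq, ← Real.exp_add]; ring_nf
    calc x ^ 2 * Real.exp (-x) = (2 * (x/2)) ^ 2 * Real.exp (-x) := by ring
    _ ≤ (Real.exp (x/2) - Real.exp (-(x/2))) ^ 2 * Real.exp (-x) := by
        have := Real.exp_pos (-x); nlinarith
    _ = (1 - Real.exp (-x)) ^ 2 := by rw [hid, mul_pow, hexp]; ring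
  have heq : (0 * (1 - Real.exp (-x)) - L * (Real.exp (-x) * (1 * L))) /
          (1 - Real.exp (-x)) ^ 2 - -(β ^ 2)⁻¹ =
      ((1 - Real.exp (-x)) ^ 2 - x ^ 2 * Real.exp (-x)) / (β ^ 2 * (1 - Real.exp (-x)) ^ 2) := by
    rw [hx]
    have hd2 : 1 - Real.exp (-(β * L)) ≠ 0 := d_ne' hL hβ
    field_simp
    ring
  rw [heq]
  apply div_nonneg (by linarith [hkey]) (by positivity)


/-- `g u = u (e^u + e^{-u}) - (e^u - e^{-u})` is monotone on ℝ. -/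
lemma g_mono : Monotone (fun u : ℝ => u * (Real.exp u + Real.exp (-u)) -
    (Real.exp u - Real.exp (-u))) := by
  have hder : ∀ x : ℝ, HasDerivAt (fun u : ℝ => u * (Real.exp u + Real.exp (-u)) -
      (Real.exp u - Real.exp (-u))) (x * (Real.exp x - Real.exp (-x))) x := by
    intro x
    have h1 : HasDerivAt (fun u : ℝ => Real.exp u + Real.exp (-u))
        (Real.exp x - Real.exp (-x)) x := by
      have := (Real.hasDerivAt_exp x).add ((hasDerivAt_neg x).exp)
      exact this.congr_deriv (by ring)
    have h2 := (hasDerivAt_id x).mul h1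
    have h3 : HasDerivAt (fun u : ℝ => Real.exp u - Real.exp (-u))
        (Real.exp x + Real.exp (-x)) x := by
      have := (Real.hasDerivAt_exp x).sub ((hasDerivAt_neg x).exp)
      exact this.congr_deriv (by ring)
    have := h2.sub h3
    exact this.congr_deriv (by simp only [id]; ring)
  apply monotone_of_deriv_nonneg
  · exact fun x => (hder x).differentiableAt
  · intro x
    rw [(hder x).deriv]
    rcases le_or_gt 0 x with hx | hx
    · have : Real.exp (-x) ≤ Real.exp x := Real.exp_le_exp.2 (by linarith)
      nlinarith
    · have : Real.exp x ≤ Real.exp (-x) := Real.exp_le_exp.2 (by linarith)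
      nlinarith

/-- `u * (u(e^u+e^{-u}) - (e^u - e^{-u})) ≥ 0` for all `u`. -/
lemma g_sign (u : ℝ) :
    0 ≤ u * (u * (Real.exp u + Real.exp (-u)) - (Real.exp u - Real.exp (-u))) := by
  rcases le_or_gt 0 u with hu | hu
  · have := g_mono (show (0:ℝ) ≤ u from hu)
    simp only [zero_mul, Real.exp_zero, neg_zero, zero_sub, sub_self] at this
    have h0 : (0:ℝ) * (Real.exp 0 + Real.exp (-0)) - (Real.exp 0 - Real.exp (-0)) = 0 := by simp
    nlinarith [g_mono (show (0:ℝ) ≤ u from hu)]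
  · have hle' : u * (Real.exp u + Real.exp (-u)) - (Real.exp u - Real.exp (-u)) ≤ 0 := by
      have hle := g_mono (show u ≤ (0:ℝ) from hu.le)
      simpa using hle
    nlinarith [mul_nonneg (neg_nonneg.2 hu.le) (neg_nonneg.2 hle')]

/-- For `β > 0`, `L/2 ≤ F L β`; for `β < 0`, `F L β ≤ L/2`. -/
lemma F_identity (hL : L ≠ 0) (hβ : β ≠ 0) :
    F L β - L / 2 = ((β * L) * (2 * (β * L) - (β * L) * (1 - Real.exp (-(β * L)))
        - 2 * (1 - Real.exp (-(β * L))))) /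
      (2 * β * ((β * L) * (1 - Real.exp (-(β * L))))) := by
  have hd : 1 - Real.exp (-(β * L)) ≠ 0 := d_ne' hL hβ
  have hx : β * L ≠ 0 := mul_ne_zero hβ hL
  rw [F, if_neg hβ]
  have hd2 : 1 - Real.exp (-(L * β)) ≠ 0 := by rw [mul_comm]; exact hd
  field_simp
  ring

lemma num_sign (x : ℝ) :
    0 ≤ x * (2 * x - x * (1 - Real.exp (-x)) - 2 * (1 - Real.exp (-x))) := by
  have key := g_sign (x / 2)
  have hexp : Real.exp (x/2) * Real.exp (-(x/2)) = 1 := by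
    rw [← Real.exp_add]; simp
  have hexp2 : Real.exp (-(x/2)) ^ 2 = Real.exp (-x) := by
    rw [sq, ← Real.exp_add]; ring_nf
  have hpos : 0 < Real.exp (-(x/2)) := Real.exp_pos _
  -- N(x) = 2x - x(1-e^{-x}) - 2(1-e^{-x}) = 2 e^{-x/2} * ((x/2)(e^{x/2}+e^{-x/2}) - (e^{x/2}-e^{-x/2}))
  have hN : 2 * x - x * (1 - Real.exp (-x)) - 2 * (1 - Real.exp (-x)) =
      2 * Real.exp (-(x/2)) * ((x/2) * (Real.exp (x/2) + Real.exp (-(x/2))) -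
        (Real.exp (x/2) - Real.exp (-(x/2)))) := by
    have : Real.exp (-x) = Real.exp (-(x/2)) * Real.exp (-(x/2)) := by
      rw [← Real.exp_add]; ring_nf
    rw [this]
    linear_combination (2 - x) * hexp
  rw [hN]
  nlinarith [mul_nonneg hpos.le key]

lemma half_le_F (hL : L ≠ 0) (hβ : 0 < β) : L / 2 ≤ F L β := by
  have hβ0 : β ≠ 0 := ne_of_gt hβ
  have hid := F_identity hL hβ0
  have hnum := num_sign (β * L)
  have hden : 0 < (β * L) * (1 - Real.exp (-(β * L))) := by
    have h := mul_exp_sub_one_pos (x := -(β * L)) (by simp [mul_ne_zero hβ0 hL])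
    nlinarith
  have : 0 ≤ F L β - L / 2 := by
    rw [hid]
    apply div_nonneg hnum
    positivity
  linarith

lemma F_le_half (hL : L ≠ 0) (hβ : β < 0) : F L β ≤ L / 2 := by
  have hβ0 : β ≠ 0 := ne_of_lt hβ
  have hid := F_identity hL hβ0
  have hnum := num_sign (β * L)
  have hden : 0 < (β * L) * (1 - Real.exp (-(β * L))) := by
    have h := mul_exp_sub_one_pos (x := -(β * L)) (by simp [mul_ne_zero hβ0 hL])
    nlinarith
  have : F L β - L / 2 ≤ 0 := by
    rw [hid]
    apply div_nonpos_of_nonneg_of_nonpos hnum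
    nlinarith
  linarith


lemma F_mono_Ioi (hL : L ≠ 0) : MonotoneOn (F L) (Ioi 0) := by
  apply monotoneOn_of_deriv_nonneg (convex_Ioi 0)
  · intro x hx
    exact (hasDerivAt_F hL (ne_of_gt hx)).continuousAt.continuousWithinAt
  · intro x hx
    rw [interior_Ioi] at hx
    exact (hasDerivAt_F hL (ne_of_gt hx)).differentiableAt.differentiableWithinAt
  · intro x hx
    rw [interior_Ioi] at hx
    rw [(hasDerivAt_F hL (ne_of_gt hx)).deriv]
    exact F_deriv_nonneg hL (ne_of_gt hx)

lemma F_mono_Iio (hL : L ≠ 0) : MonotoneOn (F L) (Iio 0) := by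
  apply monotoneOn_of_deriv_nonneg (convex_Iio 0)
  · intro x hx
    exact (hasDerivAt_F hL (ne_of_lt hx)).continuousAt.continuousWithinAt
  · intro x hx
    rw [interior_Iio] at hx
    exact (hasDerivAt_F hL (ne_of_lt hx)).differentiableAt.differentiableWithinAt
  · intro x hx
    rw [interior_Iio] at hx
    rw [(hasDerivAt_F hL (ne_of_lt hx)).deriv]
    exact F_deriv_nonneg hL (ne_of_lt hx)

lemma F_mono (hL : L ≠ 0) : Monotone (F L) := by
  intro a b hab
  rcases eq_or_lt_of_le hab with rfl | hab
  · exact le_refl _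
  rcases lt_trichotomy a 0 with ha | ha | ha
  · rcases lt_trichotomy b 0 with hb | hb | hb
    · exact F_mono_Iio hL ha hb hab.le
    · subst hb
      have : F L 0 = L / 2 := by simp [F]
      rw [this]
      exact F_le_half hL ha
    · exact le_trans (F_le_half hL ha) (half_le_F hL hb)
  · subst ha
    have h0 : F L 0 = L / 2 := by simp [F]
    rw [h0]
    exact half_le_F hL hab
  · exact F_mono_Ioi hL ha (lt_trans ha hab) hab.le


lemma intervalIntegrable_F (hL : L ≠ 0) (a b : ℝ) :
    IntervalIntegrable (F L) MeasureTheory.volume a b :=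
  ((F_mono hL).monotoneOn _).intervalIntegrable

/-- FTC on intervals avoiding `0` in the interior. -/
lemma integral_F_aux (hL : L ≠ 0) {a b : ℝ} (hab : a ≤ b)
    (h0 : ∀ x ∈ Ioo a b, x ≠ 0) :
    ∫ u in a..b, F L u = Phi L b - Phi L a := by
  apply intervalIntegral.integral_eq_sub_of_hasDeriv_right_of_le hab
  · exact (continuous_Phi hL).continuousOn
  · intro x hx
    exact ((hasDerivAt_Phi hL (h0 x hx)).hasDerivWithinAt)
  · exact intervalIntegrable_F hL a b

lemma integral_F (hL : L ≠ 0) {a b : ℝ} (hab : a ≤ b) :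
    ∫ u in a..b, F L u = Phi L b - Phi L a := by
  by_cases h0 : (0:ℝ) ∈ Ioo a b
  · obtain ⟨ha, hb⟩ := h0
    have h1 := integral_F_aux hL ha.le (fun x hx => ne_of_lt hx.2)
    have h2 := integral_F_aux hL hb.le (fun x hx => ne_of_gt hx.1)
    have h3 := intervalIntegral.integral_add_adjacent_intervals
      (intervalIntegrable_F hL a 0) (intervalIntegrable_F hL 0 b)
    rw [h1, h2] at h3
    rw [← h3]
    ring
  · apply integral_F_aux hL hab
    intro x hx hx0
    exact h0 (hx0 ▸ hx)


lemma Phi_increment_mono (hL : L ≠ 0) {a b : ℝ} (hab : a ≤ b) :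
    Phi L a - Phi L (a - 1) ≤ Phi L b - Phi L (b - 1) := by
  rw [← integral_F hL (show a - 1 ≤ a by linarith), ← integral_F hL (show b - 1 ≤ b by linarith)]
  have hshift : (∫ u in (a-1)..a, F L (u + (b - a))) = ∫ u in (b-1)..b, F L u := by
    rw [intervalIntegral.integral_comp_add_right]
    congr 1 <;> ring
  rw [← hshift]
  apply intervalIntegral.integral_mono_on (show a - 1 ≤ a by linarith)
  · exact intervalIntegrable_F hL _ _
  · have h := (intervalIntegrable_F hL (b-1) b).comp_add_right (b - a)
    have e1 : b - 1 - (b - a) = a - 1 := by ring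
    have e2 : b - (b - a) = a := by ring
    rwa [e1, e2] at h
  · intro x hx
    exact F_mono hL (by linarith)

end FSWaux

theorem fSW_inv_beta_monotone (t : ℝ) (ht : 0 < t) (ht1 : t ≠ 1) :
    MonotoneOn (fun β : ℝ => (1 - 1 / β) * (1 - t ^ β) / (1 - t ^ (β - 1)))
      {β : ℝ | β ≠ 0 ∧ β ≠ 1} := by
  intro a ha b hb hab
  obtain ⟨ha0, ha1⟩ := ha
  obtain ⟨hb0, hb1⟩ := hb
  set L := Real.log t with hLdef
  have hL : L ≠ 0 := by
    intro h
    rcases Real.log_eq_zero.1 h with h' | h' | h' <;> [linarith; exact ht1 h'; linarith]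
  have hrpow : ∀ β : ℝ, t ^ β = Real.exp (β * L) := by
    intro β
    rw [Real.rpow_def_of_pos ht, mul_comm]
  have key : ∀ β : ℝ, β ≠ 0 → β ≠ 1 →
      (1 - 1 / β) * (1 - t ^ β) / (1 - t ^ (β - 1)) =
        Real.exp (FSWaux.Phi L β - FSWaux.Phi L (β - 1)) := by
    intro β hβ0 hβ1
    have hβ1' : β - 1 ≠ 0 := sub_ne_zero.2 hβ1
    have h1 : (1 - 1 / β) * (1 - t ^ β) / (1 - t ^ (β - 1)) =
        FSWaux.G L β / FSWaux.G L (β - 1) := by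
      rw [hrpow β, hrpow (β - 1), FSWaux.G, if_neg hβ0, FSWaux.G, if_neg hβ1']
      have hd : 1 - Real.exp ((β - 1) * L) ≠ 0 := FSWaux.d_ne hL hβ1'
      field_simp
    have h2 : 0 < FSWaux.G L β / FSWaux.G L (β - 1) := by
      have hq : FSWaux.G L β / FSWaux.G L (β - 1) =
          (FSWaux.G L β * (-L)) / (FSWaux.G L (β - 1) * (-L)) := by
        rw [mul_div_mul_right _ _ (neg_ne_zero.2 hL)]
      rw [hq]
      exact div_pos (FSWaux.G_mul_pos hL β) (FSWaux.G_mul_pos hL (β - 1))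
    have h3 : FSWaux.Phi L β - FSWaux.Phi L (β - 1) =
        Real.log (FSWaux.G L β / FSWaux.G L (β - 1)) :=
      (Real.log_div (FSWaux.G_ne hL β) (FSWaux.G_ne hL (β - 1))).symm
    rw [h1, h3, Real.exp_log h2]
  simp only
  rw [key a ha0 ha1, key b hb0 hb1]
  exact Real.exp_le_exp.2 (FSWaux.Phi_increment_mono hL hab)
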